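/- arXiv:2605.09903 — 2 statements merged into one kernel-verified Lean document; each statement's English description precedes it below -/
import Mathlib

section
/- Let f : ℂ → ℂ be holomorphic on a neighborhood of the closed disc D̄(a, δ) and suppose f(D(a, δ)) ⊆ D(a, δ/2). Then f has a fixed point ζ ∈ D(a, δ/2), and for every z ∈ D(a, δ/2), the orbit f^n(z) converges to ζ. -/
open Metric
open scoped NNReal

private lemma mobius_ne {w₀ w : ℂ} (h0 : ‖w₀‖ < 1) (hw : ‖w‖ ≤ 1) :
    1 - (starRingEnd ℂ) w₀ * w ≠ 0 := by
  have : ‖(starRingEnd ℂ) w₀ * w‖ < 1 := by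
    rw [norm_mul, Complex.norm_conj]
    calc ‖w₀‖ * ‖w‖ ≤ ‖w₀‖ * 1 := by
          apply mul_le_mul_of_nonneg_left hw (norm_nonneg _)
      _ < 1 := by simpa using h0
  intro hc
  rw [sub_eq_zero] at hc
  rw [← hc] at this
  simp at this

private lemma mobius_mapsTo {w₀ : ℂ} (h : ‖w₀‖ < 1) :
    Set.MapsTo (fun w => (w - w₀) / (1 - (starRingEnd ℂ) w₀ * w)) (ball 0 1) (ball 0 1) := by
  intro w hw
  rw [mem_ball_zero_iff] at hw ⊢
  have hne : 1 - (starRingEnd ℂ) w₀ * w ≠ 0 := mobius_ne h hw.le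
  have hpos : 0 < ‖1 - (starRingEnd ℂ) w₀ * w‖ := norm_pos_iff.mpr hne
  rw [norm_div, div_lt_one hpos]
  have key : Complex.normSq (1 - (starRingEnd ℂ) w₀ * w) - Complex.normSq (w - w₀)
      = (1 - Complex.normSq w₀) * (1 - Complex.normSq w) := by
    simp only [Complex.normSq_apply, Complex.sub_re, Complex.sub_im, Complex.one_re,
      Complex.one_im, Complex.mul_re, Complex.mul_im, Complex.conj_re, Complex.conj_im]
    ring
  have h1 : Complex.normSq w₀ < 1 := by
    rw [← Complex.sq_norm]; nlinarith [norm_nonneg w₀]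
  have h2 : Complex.normSq w < 1 := by
    rw [← Complex.sq_norm]; nlinarith [norm_nonneg w]
  have hlt : ‖w - w₀‖ ^ 2 < ‖1 - (starRingEnd ℂ) w₀ * w‖ ^ 2 := by
    rw [Complex.sq_norm, Complex.sq_norm]
    nlinarith
  exact lt_of_pow_lt_pow_left₀ 2 (norm_nonneg _) hlt

private lemma mobius_hasDerivAt (w₀ w : ℂ) (h : 1 - (starRingEnd ℂ) w₀ * w ≠ 0) :
    HasDerivAt (fun z => (z - w₀) / (1 - (starRingEnd ℂ) w₀ * z))
      ((1 - (starRingEnd ℂ) w₀ * w₀) / (1 - (starRingEnd ℂ) w₀ * w) ^ 2) w := by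
  have h1 : HasDerivAt (fun z : ℂ => z - w₀) 1 w := (hasDerivAt_id w).sub_const w₀
  have h2 : HasDerivAt (fun z : ℂ => 1 - (starRingEnd ℂ) w₀ * z) (-((starRingEnd ℂ) w₀)) w := by
    simpa using ((hasDerivAt_id w).const_mul ((starRingEnd ℂ) w₀)).const_sub 1
  have := h1.div h2 h
  refine this.congr_deriv ?_
  ring

/-- If `f` is holomorphic on a neighborhood of the closed disc `D̄(a, δ)` and maps
`D(a, δ)` into `D(a, δ/2)`, then `f` has a fixed point `ζ ∈ D(a, δ/2)` and every
orbit starting in `D(a, δ/2)` converges to `ζ`. -/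
theorem stmt_4 (f : ℂ → ℂ) (a : ℂ) (δ : ℝ) (hδ : 0 < δ)
    (U : Set ℂ) (hU : IsOpen U) (hUa : closedBall a δ ⊆ U)
    (hf : DifferentiableOn ℂ f U)
    (hmap : f '' ball a δ ⊆ ball a (δ / 2)) :
    ∃ ζ ∈ ball a (δ / 2), f ζ = ζ ∧
      ∀ z ∈ ball a (δ / 2),
        Filter.Tendsto (fun n => f^[n] z) Filter.atTop (nhds ζ) := by
  have hδ2 : (0:ℝ) < δ / 2 := by linarith
  have hδC : (δ : ℂ) ≠ 0 := by exact_mod_cast hδ.ne'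
  set s := closedBall a (δ / 2) with hs
  have hsub : s ⊆ ball a δ := by
    intro z hz
    rw [hs, mem_closedBall] at hz
    rw [mem_ball]
    linarith
  have hdiffAt : ∀ z ∈ ball a δ, DifferentiableAt ℂ f z := fun z hz =>
    hf.differentiableAt (hU.mem_nhds (hUa (ball_subset_closedBall hz)))
  have hsf : Set.MapsTo f s s := fun z hz =>
    ball_subset_closedBall (hmap ⟨z, hsub hz, rfl⟩)
  -- the rescaled map
  set F : ℂ → ℂ := fun u => (2 / δ) * (f (a + δ * u) - a) with hF
  have hpt : ∀ u ∈ ball (0:ℂ) 1, a + δ * u ∈ ball a δ := by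
    intro u hu
    rw [mem_ball_zero_iff] at hu
    rw [mem_ball, dist_eq_norm]
    calc ‖a + δ * u - a‖ = δ * ‖u‖ := by
          rw [add_sub_cancel_left, norm_mul, Complex.norm_real,
            Real.norm_eq_abs, abs_of_pos hδ]
      _ < δ * 1 := by exact mul_lt_mul_of_pos_left hu hδ
      _ = δ := mul_one δ
  have hFmaps : Set.MapsTo F (ball 0 1) (ball 0 1) := by
    intro u hu
    rw [mem_ball_zero_iff]
    have him := hmap ⟨a + δ * u, hpt u hu, rfl⟩
    rw [mem_ball, dist_eq_norm] at him
    rw [hF]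
    calc ‖(2 / (δ:ℂ)) * (f (a + δ * u) - a)‖ = (2/δ) * ‖f (a + δ * u) - a‖ := by
          rw [norm_mul]
          congr 1
          rw [show ((2:ℂ)/δ) = ((2/δ : ℝ) : ℂ) by push_cast; ring, Complex.norm_real,
            Real.norm_eq_abs, abs_of_pos (by positivity)]
      _ < (2/δ) * (δ/2) := by
          exact mul_lt_mul_of_pos_left him (by positivity)
      _ = 1 := by field_simp
  have hFderiv : ∀ u ∈ ball (0:ℂ) 1, HasDerivAt F (2 * deriv f (a + δ * u)) u := by
    intro u hu
    have hfd : DifferentiableAt ℂ f (a + δ * u) := hdiffAt _ (hpt u hu)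
    have h1 : HasDerivAt (fun u : ℂ => a + δ * u) δ u := by
      simpa using ((hasDerivAt_id u).const_mul (δ:ℂ)).const_add a
    have h2 : HasDerivAt (fun u : ℂ => f (a + δ * u)) (deriv f (a + δ * u) * δ) u :=
      hfd.hasDerivAt.comp u h1
    have h3 := (h2.sub_const a).const_mul ((2:ℂ) / δ)
    refine h3.congr_deriv ?_
    rw [mul_comm (deriv f _) _, ← mul_assoc, div_mul_cancel₀ (2:ℂ) hδC]
  -- key derivative bound
  have key : ∀ z ∈ s, ‖deriv f z‖ ≤ 2 / 3 := by
    intro z hz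
    set b : ℂ := (z - a) / δ with hb
    have hzb : a + δ * b = z := by rw [hb]; field_simp; ring
    have hbn : ‖b‖ ≤ 1 / 2 := by
      rw [hs, mem_closedBall, dist_eq_norm] at hz
      rw [hb, norm_div, Complex.norm_real, Real.norm_eq_abs, abs_of_pos hδ,
        div_le_div_iff₀ (by positivity) (by norm_num)]
      linarith
    have hbball : b ∈ ball (0:ℂ) 1 := by
      rw [mem_ball_zero_iff]; linarith
    set w₀ : ℂ := F b with hw0
    have hw₀ : ‖w₀‖ < 1 := by
      have := hFmaps hbball
      rwa [mem_ball_zero_iff] at this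
    set m : ℂ → ℂ := fun w => (w - w₀) / (1 - (starRingEnd ℂ) w₀ * w) with hm
    set p : ℂ → ℂ := fun u => (u - (-b)) / (1 - (starRingEnd ℂ) (-b) * u) with hp
    have hbn1 : ‖(-b : ℂ)‖ < 1 := by rw [norm_neg]; linarith
    have hpmaps : Set.MapsTo p (ball 0 1) (ball 0 1) := mobius_mapsTo hbn1
    have hmmaps : Set.MapsTo m (ball 0 1) (ball 0 1) := mobius_mapsTo hw₀
    have hp0 : p 0 = b := by simp [hp]
    -- H = m ∘ F ∘ p
    set H : ℂ → ℂ := m ∘ F ∘ p with hH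
    have hHmaps : Set.MapsTo H (ball 0 1) (ball 0 1) :=
      hmmaps.comp (hFmaps.comp hpmaps)
    have hHdiff : DifferentiableOn ℂ H (ball 0 1) := by
      intro w hw
      rw [mem_ball_zero_iff] at hw
      have hd1 : DifferentiableAt ℂ p w :=
        (mobius_hasDerivAt (-b) w (mobius_ne hbn1 hw.le)).differentiableAt
      have hpw : p w ∈ ball (0:ℂ) 1 := hpmaps (mem_ball_zero_iff.mpr hw)
      have hd2 : DifferentiableAt ℂ F (p w) := (hFderiv _ hpw).differentiableAt
      have hFpw : F (p w) ∈ ball (0:ℂ) 1 := hFmaps hpw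
      rw [mem_ball_zero_iff] at hFpw
      have hd3 : DifferentiableAt ℂ m (F (p w)) :=
        (mobius_hasDerivAt w₀ _ (mobius_ne hw₀ hFpw.le)).differentiableAt
      exact ((hd3.comp _ hd2).comp _ hd1).differentiableWithinAt
    have hH0 : H 0 = 0 := by
      simp only [hH, Function.comp_apply, hp0, hm, ← hw0, sub_self, zero_div]
    -- derivative of H at 0
    have hpne : (1 : ℂ) - (starRingEnd ℂ) (-b) * 0 ≠ 0 := by simp
    have hp' : HasDerivAt p ((1 - (starRingEnd ℂ) (-b) * (-b)) /
        (1 - (starRingEnd ℂ) (-b) * 0) ^ 2) 0 := mobius_hasDerivAt (-b) 0 hpne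
    have hmne : (1 : ℂ) - (starRingEnd ℂ) w₀ * w₀ ≠ 0 := mobius_ne hw₀ hw₀.le
    have hm' : HasDerivAt m ((1 - (starRingEnd ℂ) w₀ * w₀) /
        (1 - (starRingEnd ℂ) w₀ * w₀) ^ 2) w₀ := mobius_hasDerivAt w₀ w₀ hmne
    have hF' : HasDerivAt F (2 * deriv f z) (p 0) := by
      rw [hp0, ← hzb]
      exact hFderiv b hbball
    have hFp : HasDerivAt (F ∘ p) (2 * deriv f z * ((1 - (starRingEnd ℂ) (-b) * (-b)) /
        (1 - (starRingEnd ℂ) (-b) * 0) ^ 2)) 0 := hF'.comp 0 hp'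
    have hcomp0 : (F ∘ p) 0 = w₀ := by rw [Function.comp_apply, hp0]
    have hm'' : HasDerivAt m ((1 - (starRingEnd ℂ) w₀ * w₀) /
        (1 - (starRingEnd ℂ) w₀ * w₀) ^ 2) ((F ∘ p) 0) := by rw [hcomp0]; exact hm'
    have hH' : HasDerivAt H ((1 - (starRingEnd ℂ) w₀ * w₀) /
        (1 - (starRingEnd ℂ) w₀ * w₀) ^ 2 * (2 * deriv f z *
        ((1 - (starRingEnd ℂ) (-b) * (-b)) / (1 - (starRingEnd ℂ) (-b) * 0) ^ 2))) 0 :=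
      hm''.comp 0 hFp
    have habs : ‖deriv H 0‖ ≤ 1 :=
      Complex.norm_deriv_le_one_of_mapsTo_ball hHdiff
        (by rw [hH0]; exact hHmaps.mono_right ball_subset_closedBall) one_pos
    rw [hH'.deriv] at habs
    -- simplify the norms
    have hconjw : (starRingEnd ℂ) w₀ * w₀ = (Complex.normSq w₀ : ℂ) :=
      (Complex.normSq_eq_conj_mul_self).symm
    have hconjb : (starRingEnd ℂ) (-b) * (-b) = (Complex.normSq b : ℂ) := by
      rw [map_neg, neg_mul_neg]
      exact (Complex.normSq_eq_conj_mul_self).symm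
    set nw := Complex.normSq w₀ with hnw
    set nb := Complex.normSq b with hnb
    have hnw1 : nw < 1 := by
      rw [hnw, ← Complex.sq_norm]; nlinarith [norm_nonneg w₀]
    have hnw0 : 0 ≤ nw := Complex.normSq_nonneg _
    have hnb4 : nb ≤ 1 / 4 := by
      rw [hnb, ← Complex.sq_norm]; nlinarith [norm_nonneg b]
    have hnb0 : 0 ≤ nb := Complex.normSq_nonneg _
    have e1 : ‖(1 : ℂ) - (starRingEnd ℂ) w₀ * w₀‖ = 1 - nw := by
      rw [hconjw, show (1 : ℂ) - (nw : ℂ) = ((1 - nw : ℝ) : ℂ) by push_cast; ring,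
        Complex.norm_real, Real.norm_eq_abs, abs_of_pos (by linarith)]
    have e2 : ‖(1 : ℂ) - (starRingEnd ℂ) (-b) * (-b)‖ = 1 - nb := by
      rw [hconjb, show (1 : ℂ) - (nb : ℂ) = ((1 - nb : ℝ) : ℂ) by push_cast; ring,
        Complex.norm_real, Real.norm_eq_abs, abs_of_pos (by linarith)]
    rw [norm_mul, norm_div, norm_mul, norm_mul, norm_div, norm_pow, norm_pow] at habs
    simp only [mul_zero, sub_zero, norm_one, one_pow, div_one] at habs
    rw [e1, e2] at habs
    have h2n : ‖(2:ℂ)‖ = 2 := by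
      rw [show (2:ℂ) = ((2:ℝ):ℂ) by norm_num, Complex.norm_real]
      norm_num
    rw [h2n] at habs
    have hfd : 0 ≤ ‖deriv f z‖ := norm_nonneg _
    have hden : (0:ℝ) < 1 - nw := by linarith
    rw [div_mul_eq_mul_div, div_le_one (by positivity)] at habs
    -- habs : (1 - nw) * (2 * ‖deriv f z‖ * (1 - nb)) ≤ (1 - nw) ^ 2
    have h1 : 2 * ‖deriv f z‖ * (1 - nb) ≤ 1 - nw := by
      have := habs
      rw [sq] at this
      exact le_of_mul_le_mul_left this hden
    nlinarith [h1]
  -- Lipschitz with constant 2/3 on s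
  have hlip : LipschitzOnWith (2/3 : ℝ≥0) f s := by
    apply (convex_closedBall a (δ/2)).lipschitzOnWith_of_nnnorm_deriv_le
      (fun x hx => hdiffAt x (hsub hx))
    intro x hx
    have := key x hx
    rw [← NNReal.coe_le_coe]
    push_cast
    exact this
  have hK : (2/3 : ℝ≥0) < 1 := by rw [← NNReal.coe_lt_coe]; norm_num
  have hcontr : ContractingWith (2/3 : ℝ≥0) (hsf.restrict f s s) :=
    ⟨hK, hlip.to_restrict⟩
  have hcompl : IsComplete s := isClosed_closedBall.isComplete
  obtain ⟨ζ, hζs, hζfix, hζt, -⟩ := hcontr.exists_fixedPoint' hcompl hsf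
    (mem_closedBall_self hδ2.le) (edist_ne_top _ _)
  have hζball : ζ ∈ ball a (δ / 2) := by
    have := hmap ⟨ζ, hsub hζs, rfl⟩
    rwa [hζfix] at this
  refine ⟨ζ, hζball, hζfix, ?_⟩
  intro z hz
  obtain ⟨ζ', hζ's, hfix', ht', -⟩ := hcontr.exists_fixedPoint' hcompl hsf
    (ball_subset_closedBall hz) (edist_ne_top _ _)
  have hζζ' : ζ' = ζ := by
    have hd := hlip.dist_le_mul ζ' hζ's ζ hζs
    rw [hfix', hζfix] at hd
    have h23 : ((2/3 : ℝ≥0) : ℝ) = 2/3 := by norm_num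
    rw [h23] at hd
    have hdn : 0 ≤ dist ζ' ζ := dist_nonneg
    have : dist ζ' ζ = 0 := by nlinarith [hd]
    exact dist_eq_zero.mp this
  rwa [hζζ'] at ht'
end

section
/- Let f : ℂ → ℂ be holomorphic on a neighborhood of the closed disc D̄(a, δ/2) with f(D(a, δ/2)) ⊆ D(a, δ/2), and suppose f has an attracting fixed point ζ ∈ D(a, δ/2). Then the orbit of every point of D(a, δ/2) under f converges to ζ. -/
open Metric

open Complex Filter Set Function


lemma normSq_lt_one' {u : ℂ} (hu : ‖u‖ < 1) : Complex.normSq u < 1 := by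
  rw [← Complex.sq_norm]
  nlinarith [norm_nonneg u]

noncomputable def mob (w u : ℂ) : ℂ := (u - w) / (1 - (starRingEnd ℂ) w * u)

lemma mob_den_ne {w u : ℂ} (hw : ‖w‖ < 1) (hu : ‖u‖ < 1) :
    (1 : ℂ) - (starRingEnd ℂ) w * u ≠ 0 := by
  intro h
  have h1 : (starRingEnd ℂ) w * u = 1 := by linear_combination -h
  have : ‖(starRingEnd ℂ) w * u‖ < 1 := by
    rw [norm_mul, RCLike.norm_conj]
    nlinarith [norm_nonneg w, norm_nonneg u]
  rw [h1] at this; simp at this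

lemma normSq_key (w u : ℂ) :
    normSq (1 - (starRingEnd ℂ) w * u) - normSq (u - w)
      = (1 - normSq u) * (1 - normSq w) := by
  simp [normSq_apply, Complex.sub_re, Complex.sub_im, Complex.mul_re, Complex.mul_im,
    Complex.conj_re, Complex.conj_im, Complex.one_re, Complex.one_im]
  ring

lemma mob_mem {w u : ℂ} (hw : ‖w‖ < 1) (hu : ‖u‖ < 1) : ‖mob w u‖ < 1 := by
  have hden := mob_den_ne hw hu
  have hdpos : 0 < ‖(1 : ℂ) - (starRingEnd ℂ) w * u‖ := norm_pos_iff.2 hden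
  rw [mob, norm_div, div_lt_one hdpos]
  have h1 : normSq (u - w) < normSq (1 - (starRingEnd ℂ) w * u) := by
    have := normSq_key w u
    have hu' : normSq u < 1 := by
      exact normSq_lt_one' hu
    have hw' : normSq w < 1 := by
      exact normSq_lt_one' hw
    nlinarith
  have := Real.sqrt_lt_sqrt (normSq_nonneg _) h1
  rwa [← Complex.norm_def, ← Complex.norm_def] at this

lemma mob_inv {w u : ℂ} (hw : ‖w‖ < 1) (hu : ‖u‖ < 1) : mob (-w) (mob w u) = u := by
  have hden := mob_den_ne hw hu
  have hK : (1 : ℂ) - (starRingEnd ℂ) w * w ≠ 0 := by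
    have : ((starRingEnd ℂ) w) * w = (normSq w : ℂ) := by
      rw [mul_comm]; exact Complex.mul_conj w
    rw [this]
    have hw' : normSq w < 1 := by
      exact normSq_lt_one' hw
    intro h
    have : ((1 - normSq w : ℝ) : ℂ) = 0 := by push_cast; linear_combination h
    have := Complex.ofReal_eq_zero.mp this
    linarith
  have hd2 : (1 : ℂ) - (starRingEnd ℂ) (-w) * mob w u ≠ 0 := by
    rw [mob, map_neg]
    intro h
    have : ((1 : ℂ) + (starRingEnd ℂ) w * ((u - w) / (1 - (starRingEnd ℂ) w * u)))
        * (1 - (starRingEnd ℂ) w * u) = (1 - (starRingEnd ℂ) w * w) := by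
      field_simp
      ring
    rw [show (1 : ℂ) - -((starRingEnd ℂ) w) * ((u - w) / (1 - (starRingEnd ℂ) w * u))
        = (1 : ℂ) + (starRingEnd ℂ) w * ((u - w) / (1 - (starRingEnd ℂ) w * u)) by ring] at h
    rw [h, zero_mul] at this
    exact hK this.symm
  rw [mob, mob, map_neg] at *
  field_simp at hd2 ⊢
  field_simp
  have hK' : (1 : ℂ) - w * (starRingEnd ℂ) w ≠ 0 := by rwa [mul_comm] at hK
  linear_combination u * mul_inv_cancel₀ hK'


lemma mob_hasDerivAt (w p : ℂ) (h : (1 : ℂ) - (starRingEnd ℂ) w * p ≠ 0) :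
    HasDerivAt (fun u => (u - w) / (1 - (starRingEnd ℂ) w * u))
      ((1 - (starRingEnd ℂ) w * w) / (1 - (starRingEnd ℂ) w * p) ^ 2) p := by
  have h1 : HasDerivAt (fun u : ℂ => u - w) 1 p := (hasDerivAt_id p).sub_const w
  have h2 : HasDerivAt (fun u : ℂ => 1 - (starRingEnd ℂ) w * u) (-(starRingEnd ℂ) w) p := by
    simpa using (((hasDerivAt_id p).const_mul ((starRingEnd ℂ) w)).const_sub 1)
  have := h1.div h2 h
  refine this.congr_deriv ?_
  ring

lemma key_lemma (G : ℂ → ℂ) (hd : DifferentiableOn ℂ G (ball (0:ℂ) 1))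
    (hmap : MapsTo G (ball (0:ℂ) 1) (ball (0:ℂ) 1))
    (h0 : G 0 = 0) (hd0 : ‖deriv G 0‖ < 1) :
    ∀ u ∈ ball (0:ℂ) 1, Tendsto (fun n => G^[n] u) atTop (nhds (0:ℂ)) := by
  intro u hu
  rw [mem_ball, dist_zero_right] at hu
  set h : ℂ → ℂ := dslope G 0 with hh
  have hball : ball (0:ℂ) 1 ∈ nhds (0:ℂ) := ball_mem_nhds _ one_pos
  have hdh : DifferentiableOn ℂ h (ball (0:ℂ) 1) := (differentiableOn_dslope hball).mpr hd
  have hle : ∀ v ∈ ball (0:ℂ) 1, ‖h v‖ ≤ 1 := by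
    intro v hv
    have := Complex.norm_dslope_le_div_of_mapsTo_ball hd (R₂ := 1) (hmap.mono_right (by rw [h0]; exact ball_subset_closedBall)) hv
    simpa using this
  set r : ℝ := (‖u‖ + 1) / 2 with hr
  have hur : ‖u‖ < r := by rw [hr]; linarith
  have hr1 : r < 1 := by rw [hr]; linarith
  have hr0 : 0 < r := by positivity
  have hsub : closedBall (0:ℂ) r ⊆ ball (0:ℂ) 1 := closedBall_subset_ball hr1
  obtain ⟨v₀, hv₀mem, hv₀max⟩ := (isCompact_closedBall (0:ℂ) r).exists_isMaxOn
    ⟨0, mem_closedBall_self hr0.le⟩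
    ((hdh.continuousOn.mono hsub).norm)
  set c : ℝ := ‖h v₀‖ with hc
  have hc0 : 0 ≤ c := norm_nonneg _
  have hc1 : c < 1 := by
    rcases lt_or_ge c 1 with h1 | h1
    · exact h1
    · exfalso
      have hceq : c = 1 := le_antisymm (hle v₀ (hsub hv₀mem)) h1
      have hmax' : IsMaxOn (norm ∘ h) (ball (0:ℂ) 1) v₀ := by
        intro x hx
        simp only [Function.comp_apply, mem_setOf_eq]
        calc ‖h x‖ ≤ 1 := hle x hx
          _ = ‖h v₀‖ := hceq.symm
      have := Complex.eqOn_of_isPreconnected_of_isMaxOn_norm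
        (convex_ball (0:ℂ) 1).isPreconnected isOpen_ball hdh (hsub hv₀mem) hmax'
      have h00 : h 0 = h v₀ := this (mem_ball_self one_pos)
      have : ‖h 0‖ = 1 := by rw [h00, ← hc, hceq]
      rw [hh, dslope_same] at this
      linarith
  have hcontr : ∀ v ∈ closedBall (0:ℂ) r, ‖G v‖ ≤ c * ‖v‖ := by
    intro v hv
    rcases eq_or_ne v 0 with rfl | hv0
    · simp [h0]
    · have : G v = h v * v := by
        rw [hh, dslope_of_ne _ hv0, slope_def_field, h0]
        field_simp
        ring
      rw [this, norm_mul]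
      have : ‖h v‖ ≤ c := hv₀max hv
      exact mul_le_mul_of_nonneg_right this (norm_nonneg v)
  have hiter : ∀ n : ℕ, G^[n] u ∈ closedBall (0:ℂ) r ∧ ‖G^[n] u‖ ≤ c ^ n * ‖u‖ := by
    intro n
    induction n with
    | zero => exact ⟨by simpa [mem_closedBall, dist_zero_right] using hur.le, by simp⟩
    | succ n ih =>
      obtain ⟨ihmem, ihle⟩ := ih
      rw [Function.iterate_succ_apply']
      have h1 : ‖G (G^[n] u)‖ ≤ c * ‖G^[n] u‖ := hcontr _ ihmem
      have hmem : G (G^[n] u) ∈ closedBall (0:ℂ) r := by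
        rw [mem_closedBall, dist_zero_right]
        have h2 : c * ‖G^[n] u‖ ≤ ‖G^[n] u‖ := by
          nlinarith [norm_nonneg (G^[n] u)]
        have h3 : ‖G^[n] u‖ ≤ r := by
          simpa [mem_closedBall, dist_zero_right] using ihmem
        linarith
      refine ⟨hmem, ?_⟩
      calc ‖G (G^[n] u)‖ ≤ c * ‖G^[n] u‖ := h1
        _ ≤ c * (c ^ n * ‖u‖) := mul_le_mul_of_nonneg_left ihle hc0
        _ = c ^ (n + 1) * ‖u‖ := by ring
  refine squeeze_zero_norm (fun n => (hiter n).2) ?_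
  have := (tendsto_pow_atTop_nhds_zero_of_lt_one hc0 hc1).mul_const ‖u‖
  simpa using this

/-- If `f` is holomorphic on a neighborhood of `D̄(a, δ/2)`, maps `D(a, δ/2)` into
itself, and has an attracting fixed point `ζ ∈ D(a, δ/2)`, then every orbit
starting in `D(a, δ/2)` converges to `ζ`. -/
theorem stmt_5 (f : ℂ → ℂ) (a : ℂ) (δ : ℝ) (hδ : 0 < δ)
    (U : Set ℂ) (hU : IsOpen U) (hUa : closedBall a (δ / 2) ⊆ U)
    (hf : DifferentiableOn ℂ f U)
    (hmap : f '' ball a (δ / 2) ⊆ ball a (δ / 2))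
    (ζ : ℂ) (hζ : ζ ∈ ball a (δ / 2)) (hfix : f ζ = ζ)
    (hattr : ‖deriv f ζ‖ < 1) :
    ∀ z ∈ ball a (δ / 2),
      Filter.Tendsto (fun n => f^[n] z) Filter.atTop (nhds ζ) := by
  set R : ℝ := δ / 2 with hRdef
  have hR : 0 < R := by positivity
  set Rc : ℂ := (R : ℂ) with hRcdef
  have hRc0 : Rc ≠ 0 := by
    simp only [hRcdef, ne_eq, Complex.ofReal_eq_zero]; exact hR.ne'
  have hnormRc : ‖Rc‖ = R := by
    rw [hRcdef, Complex.norm_real, Real.norm_eq_abs, abs_of_pos hR]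
  -- membership criterion
  have hmem_iff : ∀ z : ℂ, z ∈ ball a R ↔ ‖(z - a) / Rc‖ < 1 := by
    intro z
    rw [mem_ball, dist_eq_norm, norm_div, hnormRc, div_lt_one hR]
  set w : ℂ := (ζ - a) / Rc with hwdef
  have hw : ‖w‖ < 1 := (hmem_iff ζ).mp hζ
  have hw' : ‖-w‖ < 1 := by rwa [norm_neg]
  have hEw : a + Rc * w = ζ := by
    rw [hwdef]; field_simp
    ring
  -- inner maps
  have hE_mem : ∀ u : ℂ, ‖u‖ < 1 → a + Rc * u ∈ ball a R := by
    intro u hu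
    rw [mem_ball, dist_eq_norm, add_sub_cancel_left, norm_mul, hnormRc]
    nlinarith
  set F : ℂ → ℂ := fun u => (f (a + Rc * u) - a) / Rc with hFdef
  have hF_maps : MapsTo F (ball (0:ℂ) 1) (ball (0:ℂ) 1) := by
    intro u hu
    rw [mem_ball_zero_iff] at hu ⊢
    have h1 : f (a + Rc * u) ∈ ball a R := hmap (mem_image_of_mem f (hE_mem u hu))
    exact (hmem_iff _).mp h1
  have hF_diff : DifferentiableOn ℂ F (ball (0:ℂ) 1) := by
    have h1 : DifferentiableOn ℂ (fun u => f (a + Rc * u)) (ball (0:ℂ) 1) := by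
      refine hf.comp ?_ ?_
      · exact ((differentiable_id.const_mul Rc).const_add a).differentiableOn
      · intro u hu
        rw [mem_ball_zero_iff] at hu
        exact hUa (ball_subset_closedBall (hE_mem u hu))
    exact (h1.sub_const a).div_const Rc
  set G : ℂ → ℂ := fun u => mob w (F (mob (-w) u)) with hGdef
  have hmob_diff : ∀ w' : ℂ, ‖w'‖ < 1 → DifferentiableOn ℂ (mob w') (ball (0:ℂ) 1) := by
    intro w' hw'' u hu
    rw [mem_ball_zero_iff] at hu
    exact (mob_hasDerivAt w' u (mob_den_ne hw'' hu)).differentiableAt.differentiableWithinAt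
  have hmob_maps : ∀ w' : ℂ, ‖w'‖ < 1 → MapsTo (mob w') (ball (0:ℂ) 1) (ball (0:ℂ) 1) := by
    intro w' hw'' u hu
    rw [mem_ball_zero_iff] at hu ⊢
    exact mob_mem hw'' hu
  have hG_maps : MapsTo G (ball (0:ℂ) 1) (ball (0:ℂ) 1) :=
    fun u hu => hmob_maps w hw (hF_maps (hmob_maps (-w) hw' hu))
  have hG_diff : DifferentiableOn ℂ G (ball (0:ℂ) 1) := by
    refine ((hmob_diff w hw).comp (hF_diff.comp (hmob_diff (-w) hw') (hmob_maps (-w) hw'))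
      (MapsTo.comp hF_maps (hmob_maps (-w) hw')))
  -- basic values
  have hmw0 : mob (-w) 0 = w := by simp [mob]
  have hFw : F w = w := by
    rw [hFdef]; simp only []
    rw [hEw, hfix, ← hwdef]
  have hmww : mob w w = 0 := by simp [mob]
  have hG0 : G 0 = 0 := by rw [hGdef]; simp only []; rw [hmw0, hFw, hmww]
  -- derivative
  have hK : (1 : ℂ) - (starRingEnd ℂ) w * w ≠ 0 := by
    have h1 : ((starRingEnd ℂ) w) * w = (Complex.normSq w : ℂ) := by
      rw [mul_comm]; exact Complex.mul_conj w
    rw [h1]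
    have hw2 : Complex.normSq w < 1 := normSq_lt_one' hw
    intro h
    have : ((1 - Complex.normSq w : ℝ) : ℂ) = 0 := by push_cast; linear_combination h
    have := Complex.ofReal_eq_zero.mp this
    linarith
  have hfd : HasDerivAt f (deriv f ζ) ζ :=
    (hf.differentiableAt (hU.mem_nhds (hUa (ball_subset_closedBall hζ)))).hasDerivAt
  have hA : HasDerivAt (mob (-w)) (1 - (starRingEnd ℂ) w * w) 0 := by
    have h := mob_hasDerivAt (-w) 0 (by simp)
    have hval : (1 - (starRingEnd ℂ) (-w) * (-w)) / (1 - (starRingEnd ℂ) (-w) * 0) ^ 2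
        = 1 - (starRingEnd ℂ) w * w := by simp
    rwa [hval] at h
  have hinner : HasDerivAt (fun u : ℂ => a + Rc * u) Rc w := by
    simpa using ((hasDerivAt_id w).const_mul Rc).const_add a
  have hFd : HasDerivAt F (deriv f ζ * Rc / Rc) w := by
    have h1 : HasDerivAt f (deriv f ζ) (a + Rc * w) := hEw ▸ hfd
    have h2 := h1.comp w hinner
    exact (h2.sub_const a).div_const Rc
  have hC : HasDerivAt (mob w)
      ((1 - (starRingEnd ℂ) w * w) / (1 - (starRingEnd ℂ) w * w) ^ 2) w :=
    mob_hasDerivAt w w hK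
  have hFA : HasDerivAt (fun u => F (mob (-w) u)) (deriv f ζ * Rc / Rc * (1 - (starRingEnd ℂ) w * w)) 0 := by
    have h1 : HasDerivAt F (deriv f ζ * Rc / Rc) (mob (-w) 0) := by rw [hmw0]; exact hFd
    exact h1.comp 0 hA
  have hGd : HasDerivAt G
      ((1 - (starRingEnd ℂ) w * w) / (1 - (starRingEnd ℂ) w * w) ^ 2 *
        (deriv f ζ * Rc / Rc * (1 - (starRingEnd ℂ) w * w))) 0 := by
    have h1 : HasDerivAt (mob w)
        ((1 - (starRingEnd ℂ) w * w) / (1 - (starRingEnd ℂ) w * w) ^ 2)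
        (F (mob (-w) 0)) := by
      rw [hmw0, hFw]; exact hC
    exact h1.comp 0 hFA
  have hderivG : deriv G 0 = deriv f ζ := by
    rw [hGd.deriv]
    field_simp
  -- apply the key lemma
  have hKey := key_lemma G hG_diff hG_maps hG0 (by rw [hderivG]; exact hattr)
  -- conjugation of one step
  have hstep : ∀ z ∈ ball a R, f z ∈ ball a R ∧
      G (mob w ((z - a) / Rc)) = mob w ((f z - a) / Rc) := by
    intro z hz
    have hfz : f z ∈ ball a R := hmap (mem_image_of_mem f hz)
    refine ⟨hfz, ?_⟩
    have hez : ‖(z - a) / Rc‖ < 1 := (hmem_iff z).mp hz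
    have h1 : mob (-w) (mob w ((z - a) / Rc)) = (z - a) / Rc := mob_inv hw hez
    rw [hGdef]; simp only []
    rw [h1]
    congr 1
    rw [hFdef]; simp only []
    congr 2
    field_simp
    congr 1; ring
  -- conjugation of iterates
  intro z hz
  have hiter : ∀ n : ℕ, f^[n] z ∈ ball a R ∧
      G^[n] (mob w ((z - a) / Rc)) = mob w ((f^[n] z - a) / Rc) := by
    intro n
    induction n with
    | zero => exact ⟨hz, by simp⟩
    | succ n ih =>
      obtain ⟨ihmem, iheq⟩ := ih
      rw [Function.iterate_succ_apply', Function.iterate_succ_apply', iheq]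
      obtain ⟨hmem', heq'⟩ := hstep _ ihmem
      exact ⟨hmem', heq'⟩
  -- conclude
  have hv : mob w ((z - a) / Rc) ∈ ball (0:ℂ) 1 :=
    mem_ball_zero_iff.2 (mob_mem hw ((hmem_iff z).mp hz))
  have htend := hKey _ hv
  set T : ℂ → ℂ := fun u => a + Rc * mob (-w) u with hTdef
  have hTcont : ContinuousAt T 0 := by
    have h1 : ContinuousAt (mob (-w)) 0 :=
      (mob_hasDerivAt (-w) 0 (by simp)).differentiableAt.continuousAt
    exact continuousAt_const.add (continuousAt_const.mul h1)
  have hT0 : T 0 = ζ := by rw [hTdef]; simp only []; rw [hmw0, hEw]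
  have hfinal := hTcont.tendsto.comp htend
  rw [hT0] at hfinal
  refine hfinal.congr ?_
  intro n
  obtain ⟨hmem, heq⟩ := hiter n
  simp only [Function.comp_apply]
  rw [heq, hTdef]; simp only []
  rw [mob_inv hw ((hmem_iff _).mp hmem)]
  field_simp
  ring
end
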